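/- arXiv:1609.07468 — 2 statements merged into one kernel-verified Lean document; each statement's English description precedes it below -/
import Mathlib

section
/- Let w be a non-zero algebraic number which is not a root of unity, and let q1, q2 be prime numbers with q1 ≠ q2 such that v_𝔭(w) = 0 for every prime ideal 𝔭 of O dividing q1·O or q2·O. Let m1, m2 be positive natural numbers and set s = q1^{m1}·q2^{m2}. Consider the finite group F = (O_w/sO_w) ⋊ ℤ/t_w(s)ℤ, where the distinguished generator of ℤ/t_w(s)ℤ acts on the additive group O_w/sO_w by multiplication by w. Then for every Dress subgroup D ≤ F there exists i ∈ {1,2} such that the image of D under the canonical projection η_i : F → (O_w/q_i^{m_i}O_w) ⋊ ℤ/t_w(q_i^{m_i})ℤ (given by reducing the first coordinate modulo q_i^{m_i}O_w and the second coordinate modulo t_w(q_i^{m_i})) is hyperelementary. -/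
open IsDedekindDomain NumberField
open scoped commutatorElement

/-- For an element `w` of a number field `K`, the subring
`O_w = {x ∈ K | v_𝔭(x) ≥ 0 for all maximal ideals 𝔭 of the ring of integers with v_𝔭(w) = 0}`.
(In multiplicative notation, `v_𝔭(x) ≥ 0` reads `v.valuation x ≤ 1` and `v_𝔭(w) = 0` reads
`v.valuation K w = 1`.) -/
noncomputable def Ow (K : Type*) [Field K] [NumberField K] (w : K) : Subring K where
  carrier := {x : K | ∀ v : HeightOneSpectrum (𝓞 K), v.valuation K w = 1 → v.valuation K x ≤ 1}
  zero_mem' := by intro v _; simp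
  one_mem' := by intro v _; simp
  add_mem' := by
    intro a b ha hb v hv
    exact le_trans (Valuation.map_add_le_max' _ _ _) (max_le (ha v hv) (hb v hv))
  mul_mem' := by
    intro a b ha hb v hv
    rw [Valuation.map_mul]
    exact mul_le_one' (ha v hv) (hb v hv)
  neg_mem' := by intro a ha v hv; rw [Valuation.map_neg]; exact ha v hv

theorem w_mem_Ow (K : Type*) [Field K] [NumberField K] (w : K) : w ∈ Ow K w :=
  fun _ hv => le_of_eq hv

/-- `w ^ z ≡ 1 mod s·O_w`, i.e. `w ^ z - 1 ∈ s·O_w` (as a condition in `K`). -/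
def WPowCongOne (K : Type*) [Field K] [NumberField K] (w : K) (s : ℕ) (z : ℤ) : Prop :=
  ∃ y ∈ Ow K w, w ^ z - 1 = (s : K) * y

/-- `t = t_w(s)`, i.e. `t·ℤ = {z : ℤ | w ^ z ≡ 1 mod s·O_w}`. -/
def IsTw (K : Type*) [Field K] [NumberField K] (w : K) (s t : ℕ) : Prop :=
  ∀ z : ℤ, (t : ℤ) ∣ z ↔ WPowCongOne K w s z

/-- The quotient ring `O_w / s·O_w`. -/
abbrev OwMod (K : Type*) [Field K] [NumberField K] (w : K) (s : ℕ) :=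
  Ow K w ⧸ (Ideal.span {(s : Ow K w)} : Ideal (Ow K w))

/-- The class of `w` in `O_w / s·O_w`. -/
noncomputable def wMod (K : Type*) [Field K] [NumberField K] (w : K) (s : ℕ) :
    OwMod K w s :=
  Ideal.Quotient.mk _ ⟨w, w_mem_Ow K w⟩

/-- `φ` is the action of `ℤ/tℤ` on the additive group of `O_w/s·O_w` in which the
distinguished generator `1` acts by multiplication by (the class of) `w`. -/
def IsWAction (K : Type*) [Field K] [NumberField K] (w : K) (s t : ℕ)
    (φ : Multiplicative (ZMod t) →* MulAut (Multiplicative (OwMod K w s))) : Prop :=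
  ∀ x : OwMod K w s,
    φ (Multiplicative.ofAdd (1 : ZMod t)) (Multiplicative.ofAdd x)
      = Multiplicative.ofAdd (wMod K w s * x)

/-- The group `F(s) = (O_w/sO_w) ⋊ ℤ/tℤ` with respect to an action `φ`. -/
abbrev Fgrp (K : Type*) [Field K] [NumberField K] (w : K) (s t : ℕ)
    (φ : Multiplicative (ZMod t) →* MulAut (Multiplicative (OwMod K w s))) :=
  Multiplicative (OwMod K w s) ⋊[φ] Multiplicative (ZMod t)

/-- A finite group `F` is a *Dress group* if there exist primes `p` and `q` and a normal
series `P ⊴ H ⊴ F` such that `P` is a `p`-group, `H/P` is cyclic and `F/H` is a `q`-group. -/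
def IsDressGroup (F : Type*) [Group F] : Prop :=
  ∃ p q : ℕ, p.Prime ∧ q.Prime ∧
    ∃ (P H : Subgroup F) (_ : P ≤ H) (hPH : (P.subgroupOf H).Normal) (hH : H.Normal),
      IsPGroup p P ∧
      (letI := hPH; IsCyclic (H ⧸ P.subgroupOf H)) ∧
      (letI := hH; IsPGroup q (F ⧸ H))

/-- A finite group is *hyperelementary* if it contains a cyclic normal subgroup whose
quotient is a `p`-group for some prime `p`. -/
def IsHyperelementary (F : Type*) [Group F] : Prop :=
  ∃ p : ℕ, p.Prime ∧ ∃ C : Subgroup F, ∃ hC : C.Normal, IsCyclic C ∧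
    (letI := hC; IsPGroup p (F ⧸ C))


-- ############ Part C: positivity of t ############

lemma integer_mem_Ow (K : Type*) [Field K] [NumberField K] (w : K) (x : 𝓞 K) :
    (algebraMap (𝓞 K) K x) ∈ Ow K w := by
  intro v _
  rw [IsDedekindDomain.HeightOneSpectrum.valuation_of_algebraMap,
    IsDedekindDomain.HeightOneSpectrum.intValuation_apply]
  exact v.intValuation_le_one x

lemma exists_delta (K : Type*) [Field K] [NumberField K] (w : K) (hw0 : w ≠ 0)
    (q m : ℕ) (hq0 : (q : 𝓞 K) ≠ 0)
    (hval' : ∀ v : HeightOneSpectrum (𝓞 K), (q : 𝓞 K) ∈ v.asIdeal → v.valuation K w = 1) :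
    ∃ δ c e : 𝓞 K, (algebraMap (𝓞 K) K δ) * w = algebraMap (𝓞 K) K c ∧
      (1 : 𝓞 K) - δ = (q : 𝓞 K) ^ m * e := by
  classical
  let I : Ideal (𝓞 K) :=
  { carrier := {b | ∃ c : 𝓞 K, (algebraMap (𝓞 K) K b) * w = algebraMap (𝓞 K) K c}
    add_mem' := by
      rintro a b ⟨ca, ha⟩ ⟨cb, hb⟩
      exact ⟨ca + cb, by rw [map_add, add_mul, ha, hb, map_add]⟩
    zero_mem' := ⟨0, by simp⟩
    smul_mem' := by
      rintro r b ⟨cb, hb⟩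
      exact ⟨r * cb, by rw [smul_eq_mul, map_mul, mul_assoc, hb, map_mul]⟩ }
  suffices h : I ⊔ Ideal.span {(q : 𝓞 K) ^ m} = ⊤ by
    have h1 : (1 : 𝓞 K) ∈ I ⊔ Ideal.span {(q : 𝓞 K) ^ m} := h ▸ Submodule.mem_top
    obtain ⟨δ, hδ, e', he', hsum⟩ := Submodule.mem_sup.mp h1
    obtain ⟨c, hc⟩ := hδ
    obtain ⟨e, he⟩ := Ideal.mem_span_singleton'.mp he'
    refine ⟨δ, c, e, hc, ?_⟩
    have h2 : (1 : 𝓞 K) - δ = e' := by rw [← hsum]; ring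
    rw [h2, ← he, mul_comm]
  by_contra hne
  obtain ⟨M, hMmax, hM⟩ := Ideal.exists_le_maximal _ hne
  have hqmM : (q : 𝓞 K) ^ m ∈ M := hM (Ideal.mem_sup_right (Ideal.subset_span rfl))
  have hqM : (q : 𝓞 K) ∈ M := hMmax.isPrime.mem_of_pow_mem m hqmM
  have hIM : I ≤ M := le_trans le_sup_left hM
  have hMbot : M ≠ ⊥ := by
    intro hbot
    rw [hbot] at hqM
    exact hq0 (Ideal.mem_bot.mp hqM)
  let v : HeightOneSpectrum (𝓞 K) := ⟨M, hMmax.isPrime, hMbot⟩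
  have hvw : v.valuation K w = 1 := hval' v hqM
  obtain ⟨r, s, hs, hws⟩ := IsFractionRing.div_surjective (A := 𝓞 K) w
  have hs0 : s ≠ 0 := nonZeroDivisors.ne_zero hs
  have hsK : algebraMap (𝓞 K) K s ≠ 0 := by
    exact IsFractionRing.to_map_ne_zero_of_mem_nonZeroDivisors hs
  have hr0 : r ≠ 0 := by
    intro h
    rw [h] at hws
    simp at hws
    exact hw0 hws.symm
  have hrs : w * algebraMap (𝓞 K) K s = algebraMap (𝓞 K) K r := by
    rw [← hws, div_mul_cancel₀ _ hsK]
  -- equal valuations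
  have hval_eq : v.intValuationDef r = v.intValuationDef s := by
    have h1 := congrArg (v.valuation K) hrs
    rw [Valuation.map_mul, hvw, one_mul,
      IsDedekindDomain.HeightOneSpectrum.valuation_of_algebraMap,
      IsDedekindDomain.HeightOneSpectrum.valuation_of_algebraMap,
      IsDedekindDomain.HeightOneSpectrum.intValuation_apply,
      IsDedekindDomain.HeightOneSpectrum.intValuation_apply] at h1
    exact h1.symm
  -- extract the exact valuation of s
  have hsne : v.intValuationDef s ≠ 0 := v.intValuation_ne_zero s hs0
  set a : Multiplicative ℤ := WithZero.unzero hsne with ha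
  have haval : (a : WithZero (Multiplicative ℤ)) = v.intValuationDef s := WithZero.coe_unzero hsne
  have hle1 : v.intValuationDef s ≤ 1 := v.intValuation_le_one s
  have h2a : a ≤ 1 := by
    rw [← haval] at hle1
    exact_mod_cast hle1
  have hanonpos : Multiplicative.toAdd a ≤ 0 := h2a
  set n : ℕ := (-(Multiplicative.toAdd a)).toNat with hn
  have hna : -(n : ℤ) = Multiplicative.toAdd a := by
    rw [hn]
    omega
  have hsval : v.intValuationDef s = Multiplicative.ofAdd (-(n : ℤ)) := by
    rw [← haval, hna]
    rfl
  have hrval : v.intValuationDef r = Multiplicative.ofAdd (-(n : ℤ)) := by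
    rw [hval_eq, hsval]
  -- divisibility facts
  have h1 : v.asIdeal ^ n ∣ Ideal.span {s} :=
    (v.intValuation_le_pow_iff_dvd s n).mp (le_of_eq hsval)
  have h2 : ¬ v.asIdeal ^ (n + 1) ∣ Ideal.span {s} := by
    intro hdvd
    have h3 := (v.intValuation_le_pow_iff_dvd s (n + 1)).mpr hdvd
    rw [IsDedekindDomain.HeightOneSpectrum.intValuation_apply, hsval] at h3
    have h4 : -((n : ℤ)) ≤ -((n : ℤ) + 1) := by
      change WithZero.exp (-(n : ℤ)) ≤ _ at h3; rw [WithZero.exp_le_exp] at h3; push_cast at h3; exact h3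
    omega
  have h3 : v.asIdeal ^ n ∣ Ideal.span {r} :=
    (v.intValuation_le_pow_iff_dvd r n).mp (le_of_eq hrval)
  -- the gcd ideal
  set G : Ideal (𝓞 K) := Ideal.span {r} ⊔ Ideal.span {s} with hG
  have hGs : G ∣ Ideal.span {s} := Ideal.dvd_iff_le.mpr le_sup_right
  obtain ⟨S', hS'⟩ := hGs
  have hS'I : ∀ b ∈ S', b ∈ I := by
    intro b hb
    have hdvd : Ideal.span {b * r} ≤ Ideal.span {s} := by
      rw [hS']
      have e1 : (Ideal.span {b * r} : Ideal (𝓞 K)) = Ideal.span {r} * Ideal.span {b} := by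
        rw [Ideal.span_singleton_mul_span_singleton, mul_comm]
      rw [e1]
      exact Ideal.mul_mono le_sup_left ((Ideal.span_singleton_le_iff_mem _).mpr hb)
    have hsdvd : s ∣ b * r := by
      rw [← Ideal.span_singleton_le_span_singleton]
      exact hdvd
    obtain ⟨c, hc⟩ := hsdvd
    refine ⟨c, ?_⟩
    have : algebraMap (𝓞 K) K b * (w * algebraMap (𝓞 K) K s) = algebraMap (𝓞 K) K (s * c) := by
      rw [hrs, ← map_mul, ← hc, mul_comm]
    rw [map_mul] at this
    have h5 : (algebraMap (𝓞 K) K b * w) * algebraMap (𝓞 K) K s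
        = algebraMap (𝓞 K) K c * algebraMap (𝓞 K) K s := by
      rw [mul_assoc, this]; ring
    exact mul_right_cancel₀ hsK h5
  have hS'M : S' ≤ M := fun b hb => hIM (hS'I b hb)
  have hMS' : v.asIdeal ∣ S' := Ideal.dvd_iff_le.mpr hS'M
  have hGn : v.asIdeal ^ n ∣ G := by
    rw [Ideal.dvd_iff_le, hG, sup_le_iff]
    exact ⟨Ideal.dvd_iff_le.mp h3, Ideal.dvd_iff_le.mp h1⟩
  have hcontra : v.asIdeal ^ (n + 1) ∣ Ideal.span {s} := by
    rw [hS', pow_succ]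
    exact mul_dvd_mul hGn hMS'
  exact h2 hcontra


set_option synthInstance.maxHeartbeats 100000 in
lemma tw_pos (K : Type*) [Field K] [NumberField K] (w : K) (hw0 : w ≠ 0)
    (q m t : ℕ) (hq : q.Prime)
    (hval' : ∀ v : HeightOneSpectrum (𝓞 K), (q : 𝓞 K) ∈ v.asIdeal → v.valuation K w = 1)
    (ht' : IsTw K w (q ^ m) t) : t ≠ 0 := by
  classical
  have hq0 : (q : 𝓞 K) ≠ 0 := Nat.cast_ne_zero.mpr hq.pos.ne'
  obtain ⟨δ, c, e, hδc, hδe⟩ := exists_delta K w hw0 q m hq0 hval'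
  -- every power of w is congruent to an integer mod q^m O_w
  have key : ∀ n : ℕ, ∃ y : 𝓞 K, ∃ o ∈ Ow K w,
      w ^ n - algebraMap (𝓞 K) K y = (q : K) ^ m * o := by
    intro n
    induction n with
    | zero => exact ⟨1, 0, (Ow K w).zero_mem, by simp⟩
    | succ n ih =>
      obtain ⟨y, o, ho, hyo⟩ := ih
      have h1δ : (1 : K) - algebraMap (𝓞 K) K δ
          = (q : K) ^ m * algebraMap (𝓞 K) K e := by
        have := congrArg (algebraMap (𝓞 K) K) hδe
        rw [map_sub, map_one, map_mul, map_pow, map_natCast] at this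
        exact this
      have hwc : w - algebraMap (𝓞 K) K c
          = (q : K) ^ m * (algebraMap (𝓞 K) K e * w) := by
        linear_combination w * h1δ + hδc
      refine ⟨c * y, w * o + algebraMap (𝓞 K) K (e * y) * w,
        (Ow K w).add_mem ((Ow K w).mul_mem (w_mem_Ow K w) ho)
          ((Ow K w).mul_mem (integer_mem_Ow K w _) (w_mem_Ow K w)), ?_⟩
      rw [map_mul, map_mul]
      linear_combination w * hyo + (algebraMap (𝓞 K) K y) * hwc
  choose Y O hO hYO using key
  -- pigeonhole in the finite quotient
  have hspanbot : (Ideal.span {(q : 𝓞 K) ^ m} : Ideal (𝓞 K)) ≠ ⊥ := by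
    rw [Ne, Ideal.span_singleton_eq_bot]
    exact pow_ne_zero _ hq0
  haveI : Fintype ((𝓞 K) ⧸ Ideal.span {(q : 𝓞 K) ^ m}) :=
    @Fintype.ofFinite _ (Ideal.finiteQuotientOfFreeOfNeBot _ hspanbot)
  haveI : Finite ((𝓞 K) ⧸ Ideal.span {(q : 𝓞 K) ^ m}) := Finite.of_fintype _
  obtain ⟨a, b, hab, heq⟩ := Finite.exists_ne_map_eq_of_infinite
    (fun n : ℕ => Ideal.Quotient.mk (Ideal.span {(q : 𝓞 K) ^ m}) (Y n))
  -- wlog a < b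
  obtain ⟨a, b, hlt, heq⟩ : ∃ a b : ℕ, a < b ∧
      Ideal.Quotient.mk (Ideal.span {(q : 𝓞 K) ^ m}) (Y a)
        = Ideal.Quotient.mk (Ideal.span {(q : 𝓞 K) ^ m}) (Y b) := by
    rcases lt_or_gt_of_ne hab with h | h
    · exact ⟨a, b, h, heq⟩
    · exact ⟨b, a, h, heq.symm⟩
  have hYab : ∃ u : 𝓞 K, Y b - Y a = (q : 𝓞 K) ^ m * u := by
    have := Ideal.Quotient.eq.mp heq.symm
    obtain ⟨u, hu⟩ := Ideal.mem_span_singleton'.mp this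
    exact ⟨u, by rw [← hu, mul_comm]⟩
  obtain ⟨u, hu⟩ := hYab
  have huK : algebraMap (𝓞 K) K (Y b) - algebraMap (𝓞 K) K (Y a)
      = (q : K) ^ m * algebraMap (𝓞 K) K u := by
    have := congrArg (algebraMap (𝓞 K) K) hu
    rw [map_sub, map_mul, map_pow, map_natCast] at this
    exact this
  have hwinv : w⁻¹ ∈ Ow K w := by
    intro v hv
    have h1 : v.valuation K w⁻¹ * v.valuation K w = 1 := by
      rw [← Valuation.map_mul, inv_mul_cancel₀ hw0, Valuation.map_one]
    rw [hv, mul_one] at h1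
    exact le_of_eq h1
  have hOw : ∃ o ∈ Ow K w, w ^ b - w ^ a = (q : K) ^ m * o := by
    refine ⟨O b - O a + algebraMap (𝓞 K) K u,
      (Ow K w).add_mem ((Ow K w).sub_mem (hO b) (hO a)) (integer_mem_Ow K w u), ?_⟩
    linear_combination hYO b - hYO a + huK
  obtain ⟨o, ho, hoe⟩ := hOw
  have hcong : WPowCongOne K w (q ^ m) ((b : ℤ) - (a : ℤ)) := by
    refine ⟨(w⁻¹) ^ a * o, (Ow K w).mul_mem ((Ow K w).pow_mem hwinv a) ho, ?_⟩
    have hqK : ((q ^ m : ℕ) : K) = (q : K) ^ m := by push_cast; ring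
    rw [hqK]
    have hzpow : w ^ ((b : ℤ) - (a : ℤ)) = w ^ (b : ℕ) * (w⁻¹) ^ (a : ℕ) := by
      rw [zpow_sub₀ hw0, zpow_natCast, zpow_natCast, div_eq_mul_inv, inv_pow]
    rw [hzpow]
    have hwa : w ^ (a : ℕ) * (w⁻¹) ^ (a : ℕ) = 1 := by
      rw [← mul_pow, mul_inv_cancel₀ hw0, one_pow]
    linear_combination ((w⁻¹) ^ (a : ℕ)) * hoe + hwa
  have hdvd : (t : ℤ) ∣ ((b : ℤ) - (a : ℤ)) := (ht' _).mpr hcong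
  intro ht0
  rw [ht0] at hdvd
  rw [Int.natCast_zero, zero_dvd_iff, sub_eq_zero] at hdvd
  have : b = a := by exact_mod_cast hdvd
  omega


-- ############ Part A: the group-theoretic core ############

lemma core_hyperelementary {E : Type*} [Group E] {τ : ℕ} (hτ : τ ≠ 0)
    (ρ : E →* Multiplicative (ZMod τ))
    {π p q : ℕ} (hπ : π.Prime) (hp : p.Prime) (hq : q.Prime) (hπp : π ≠ p)
    {N₀ : ℕ}
    (hker_comm : ∀ x y : E, ρ x = 1 → ρ y = 1 → Commute x y)
    (hker_tor : ∀ x : E, ρ x = 1 → x ^ π ^ N₀ = 1)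
    {P H : Subgroup E} (hPH : P ≤ H) (hPHn : (P.subgroupOf H).Normal)
    (hHn : H.Normal) (hP : IsPGroup p P)
    (hcyc : IsCyclic (H ⧸ P.subgroupOf H))
    (hEH : letI := hHn; IsPGroup q (E ⧸ H)) :
    IsHyperelementary E := by
  classical
  letI := hHn
  letI := hPHn
  haveI := hcyc
  -- elements of `P` killed by a power of `π` are trivial
  have htrivP : ∀ u : E, u ∈ P → (∃ c : ℕ, u ^ π ^ c = 1) → u = 1 := by
    rintro u hu ⟨c, hc⟩
    obtain ⟨j, hj⟩ := hP ⟨u, hu⟩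
    have hj' : u ^ p ^ j = 1 := by
      have := congrArg (Subtype.val) hj
      simpa using this
    have h1 : orderOf u ∣ π ^ c := orderOf_dvd_of_pow_eq_one hc
    have h2 : orderOf u ∣ p ^ j := orderOf_dvd_of_pow_eq_one hj'
    have hcop : Nat.Coprime (π ^ c) (p ^ j) :=
      Nat.Coprime.pow _ _ ((Nat.coprime_primes hπ hp).mpr hπp)
    have : orderOf u ∣ 1 := hcop ▸ Nat.dvd_gcd h1 h2
    rw [orderOf_eq_one_iff.mp (Nat.dvd_one.mp this)]
  -- commutators of elements of `H` lie in `P`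
  letI : CommGroup (H ⧸ P.subgroupOf H) := IsCyclic.commGroup
  have hcommP : ∀ a b : E, a ∈ H → b ∈ H → ⁅a, b⁆ ∈ P := by
    intro a b ha hb
    have h0 : (QuotientGroup.mk' (P.subgroupOf H)) ⁅(⟨a, ha⟩ : H), (⟨b, hb⟩ : H)⁆ = 1 := by
      rw [map_commutatorElement]
      exact commutatorElement_eq_one_iff_commute.mpr (mul_comm _ _)
    have hm : ⁅(⟨a, ha⟩ : H), (⟨b, hb⟩ : H)⁆ ∈ P.subgroupOf H := by
      rwa [← QuotientGroup.ker_mk' (P.subgroupOf H), MonoidHom.mem_ker]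
    have := Subgroup.mem_subgroupOf.mp hm
    simpa [commutatorElement_def] using this
  -- basic arithmetic of τ
  set b := τ.factorization q with hbdef
  set m := τ / q ^ b with hmdef
  have hτfac : q ^ b * m = τ := Nat.ordProj_mul_ordCompl_eq_self τ q
  have hqm : ¬ q ∣ m := Nat.not_dvd_ordCompl hq hτ
  have hCtau : ∀ u : Multiplicative (ZMod τ), u ^ τ = 1 := by
    intro u
    have h0 : τ • u.toAdd = 0 := by
      rw [nsmul_eq_mul, ZMod.natCast_self, zero_mul]
    have := congrArg (Multiplicative.ofAdd) h0
    rwa [ofAdd_nsmul, ofAdd_toAdd, ofAdd_zero] at this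
  -- every element of `E` has a `q`-power power in `H`
  have hxH : ∀ x : E, ∃ k, x ^ q ^ k ∈ H := by
    intro x
    obtain ⟨k, hk⟩ := hEH (QuotientGroup.mk' H x)
    rw [← map_pow, ← MonoidHom.mem_ker, QuotientGroup.ker_mk'] at hk
    exact ⟨k, hk⟩
  -- ρ x ^ q ^ b is in the image of H
  have hc1 : ∀ x : E, ρ x ^ q ^ b ∈ H.map ρ := by
    intro x
    obtain ⟨k, hk⟩ := hxH x
    have hS1 : ρ x ^ q ^ k ∈ H.map ρ := ⟨x ^ q ^ k, hk, by rw [map_pow]⟩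
    rcases le_total k b with hkb | hbk
    · have he : ρ x ^ q ^ b = (ρ x ^ q ^ k) ^ q ^ (b - k) := by
        rw [← pow_mul, ← pow_add, Nat.add_sub_cancel' hkb]
      rw [he]
      exact Subgroup.pow_mem _ hS1 _
    · have hd : Nat.gcd (q ^ k) τ = q ^ b := by
        have he1 : q ^ k = q ^ b * q ^ (k - b) := by
          rw [← pow_add, Nat.add_sub_cancel' hbk]
        rw [← hτfac, he1, Nat.gcd_mul_left]
        have he2 : Nat.gcd (q ^ (k - b)) m = 1 :=
          Nat.Coprime.pow_left _ (hq.coprime_iff_not_dvd.mpr hqm)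
        rw [he2, mul_one]
      have hbez := Nat.gcd_eq_gcd_ab (q ^ k) τ
      have hz : (ρ x) ^ ((Nat.gcd (q ^ k) τ : ℤ)) ∈ H.map ρ := by
        rw [hbez, zpow_add, zpow_mul, zpow_mul]
        refine Subgroup.mul_mem _ (Subgroup.zpow_mem _ ?_ _) (Subgroup.zpow_mem _ ?_ _)
        · rwa [zpow_natCast]
        · rw [zpow_natCast, hCtau]
          exact Subgroup.one_mem _
      rw [hd, zpow_natCast] at hz
      exact hz
  -- a generator of the subgroup of (q^b)-th powers of the image of ρ
  have hjgen : ∃ z : E, z ∈ H ∧ (ρ z) ^ m = 1 ∧ ∀ x : E, ∃ j : ℤ, ρ x ^ q ^ b = (ρ z) ^ j := by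
    set f2 : E →* Multiplicative (ZMod τ) := (powMonoidHom (q ^ b)).comp ρ with hf2
    obtain ⟨ζ₀, hζ₀⟩ := IsCyclic.exists_generator (α := f2.range)
    have hζQ : (ζ₀ : Multiplicative (ZMod τ)) ∈ f2.range := ζ₀.2
    obtain ⟨x₀, hx₀⟩ := hζQ
    have hx₀' : ρ x₀ ^ q ^ b = (ζ₀ : Multiplicative (ZMod τ)) := hx₀
    have hζS : (ζ₀ : Multiplicative (ZMod τ)) ∈ H.map ρ := by
      rw [← hx₀']; exact hc1 x₀
    obtain ⟨z, hzH, hρz⟩ := hζS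
    refine ⟨z, hzH, ?_, ?_⟩
    · rw [hρz, ← hx₀', ← pow_mul, hτfac, hCtau]
    intro x
    have hmem : ρ x ^ q ^ b ∈ f2.range := ⟨x, rfl⟩
    obtain ⟨j, hj⟩ := Subgroup.mem_zpowers_iff.mp (hζ₀ ⟨_, hmem⟩)
    refine ⟨j, ?_⟩
    have h6 := congrArg (Subtype.val) hj
    simp only [SubgroupClass.coe_zpow] at h6
    rw [hρz, ← h6]
  obtain ⟨z, hzH, hζm', hjx⟩ := hjgen
  have hζm : orderOf (ρ z) ∣ m := orderOf_dvd_of_pow_eq_one hζm'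
  -- z has finite order
  have hm0 : m ≠ 0 := by
    intro h
    rw [h, mul_zero] at hτfac
    exact hτ hτfac.symm
  have hoζ0 : orderOf (ρ z) ≠ 0 := fun h => hm0 (by simpa [h] using hζm)
  have hztor : z ^ (orderOf (ρ z) * π ^ N₀) = 1 := by
    have h1 : ρ (z ^ orderOf (ρ z)) = 1 := by rw [map_pow, pow_orderOf_eq_one]
    have h2 := hker_tor _ h1
    rwa [← pow_mul] at h2
  have hoz0 : orderOf z ≠ 0 := by
    have hd := orderOf_dvd_of_pow_eq_one hztor
    intro h
    rw [h] at hd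
    have := Nat.eq_zero_of_zero_dvd hd
    exact absurd this (Nat.mul_ne_zero hoζ0 (pow_ne_zero _ hπ.pos.ne'))
  -- decompose the order of z into π-part and π-prime part
  set α' := (orderOf z).factorization π with hα'
  set β := orderOf z / π ^ α' with hβ
  have hozfac : π ^ α' * β = orderOf z := Nat.ordProj_mul_ordCompl_eq_self (orderOf z) π
  have hπβ : ¬ π ∣ β := Nat.not_dvd_ordCompl hπ hoz0
  have hβ0 : β ≠ 0 := by
    intro h
    rw [h, mul_zero] at hozfac
    exact hoz0 hozfac.symm
  have hcopπβ : Nat.Coprime (π ^ α') β :=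
    Nat.Coprime.pow_left _ (hπ.coprime_iff_not_dvd.mpr hπβ)
  have hbez2 : (1 : ℤ) = (π : ℤ) ^ α' * Nat.gcdA (π ^ α') β + (β : ℤ) * Nat.gcdB (π ^ α') β := by
    have h0 := Nat.gcd_eq_gcd_ab (π ^ α') β
    rw [Nat.Coprime.gcd_eq_one hcopπβ] at h0
    push_cast at h0 ⊢
    linarith
  set γ : ℤ := (π : ℤ) ^ α' * Nat.gcdA (π ^ α') β with hγ
  set z' := z ^ γ with hz'def
  set zπ := z ^ ((1 : ℤ) - γ) with hzπdef
  have hzsplit : zπ * z' = z := by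
    rw [hzπdef, hz'def, ← zpow_add, sub_add_cancel, zpow_one]
  have hoz_int : z ^ ((orderOf z : ℤ)) = 1 := by
    rw [zpow_natCast, pow_orderOf_eq_one]
  have hz'β : z' ^ β = 1 := by
    have h0 : γ * (β : ℤ) = (orderOf z : ℤ) * Nat.gcdA (π ^ α') β := by
      rw [hγ, ← hozfac]
      push_cast
      ring
    rw [hz'def, ← zpow_natCast (z ^ γ) β, ← zpow_mul, h0, zpow_mul, hoz_int, one_zpow]
  have hzπtor : zπ ^ π ^ α' = 1 := by
    have h0 : ((1 : ℤ) - γ) * ((π : ℤ) ^ α') = (orderOf z : ℤ) * Nat.gcdB (π ^ α') β := by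
      have h1 : (1 : ℤ) - γ = (β : ℤ) * Nat.gcdB (π ^ α') β := by
        rw [hγ]; linarith [hbez2]
      rw [h1, ← hozfac]
      push_cast
      ring
    rw [hzπdef, ← zpow_natCast (z ^ ((1:ℤ) - γ)) (π ^ α'), ← zpow_mul]
    push_cast
    push_cast at h0
    rw [h0, zpow_mul, hoz_int, one_zpow]
  -- the subgroup BH = ker ρ ⊓ H
  set BH : Subgroup E := ρ.ker ⊓ H with hBHdef
  have hBHn : BH.Normal := by
    constructor
    intro n hn g
    exact ⟨(MonoidHom.normal_ker ρ).conj_mem n hn.1 g, hHn.conj_mem n hn.2 g⟩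
  -- the subgroup A
  set genA : Set E := (BH : Set E) ∪ {z} with hgenA
  set A : Subgroup E := Subgroup.closure genA with hAdef
  have hBH_le_A : ∀ x ∈ BH, x ∈ A := fun x hx => Subgroup.subset_closure (Or.inl hx)
  have hzA : z ∈ A := Subgroup.subset_closure (Or.inr rfl)
  have hAH : A ≤ H := by
    rw [hAdef, Subgroup.closure_le]
    rintro x (hx | hx)
    · exact hx.2
    · rw [Set.mem_singleton_iff] at hx
      rw [hx]
      exact hzH
  -- the generators commute
  have hzBH : ∀ u ∈ BH, Commute z u := by
    intro u hu
    have h1 : ⁅z, u⁆ ∈ P := hcommP z u hzH hu.2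
    have h2 : ρ ⁅z, u⁆ = 1 := by
      rw [map_commutatorElement]
      exact commutatorElement_eq_one_iff_commute.mpr (mul_comm _ _)
    have h3 : ⁅z, u⁆ = 1 := htrivP _ h1 ⟨N₀, hker_tor _ h2⟩
    exact commutatorElement_eq_one_iff_commute.mp h3
  have hA_comm : ∀ x ∈ A, ∀ y ∈ A, Commute x y := by
    have hgen : ∀ x ∈ genA, ∀ y ∈ genA, Commute x y := by
      rintro x (hx | hx) y (hy | hy)
      · exact hker_comm x y (MonoidHom.mem_ker.mp hx.1) (MonoidHom.mem_ker.mp hy.1)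
      · rw [Set.mem_singleton_iff] at hy
        rw [hy]
        exact (hzBH x hx).symm
      · rw [Set.mem_singleton_iff] at hx
        rw [hx]
        exact hzBH y hy
      · rw [Set.mem_singleton_iff] at hx hy
        rw [hx, hy]
    intro x hx y hy
    rw [hAdef] at hx hy
    exact Subgroup.closure_induction₂
      (fun a b ha hb => hgen a ha b hb)
      (fun a _ => Commute.one_left a)
      (fun a _ => Commute.one_right a)
      (fun a b c _ _ _ h1 h2 => Commute.mul_left h1 h2)
      (fun a b c _ _ _ h1 h2 => Commute.mul_right h1 h2)
      (fun a b _ _ h1 => Commute.inv_left h1)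
      (fun a b _ _ h1 => Commute.inv_right h1)
      hx hy
  have hA_norm : A.Normal := by
    constructor
    intro n hn g
    induction hn using Subgroup.closure_induction with
    | mem x hx =>
      rcases hx with hx | hx
      · exact hBH_le_A _ (hBHn.conj_mem x hx g)
      · rw [Set.mem_singleton_iff] at hx
        subst hx
        have hu : ⁅g, x⁆ ∈ BH := by
          rw [hBHdef, Subgroup.mem_inf]
          constructor
          · rw [MonoidHom.mem_ker, map_commutatorElement]
            exact commutatorElement_eq_one_iff_commute.mpr (mul_comm _ _)
          · have h1 : g * x * g⁻¹ ∈ H := hHn.conj_mem x hzH g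
            have h2 : ⁅g, x⁆ = (g * x * g⁻¹) * x⁻¹ := by
              rw [commutatorElement_def]
            rw [h2]
            exact H.mul_mem h1 (H.inv_mem hzH)
        have h3 : g * x * g⁻¹ = ⁅g, x⁆ * x := by
          rw [commutatorElement_def]
          group
        rw [h3]
        exact A.mul_mem (hBH_le_A _ hu) hzA
    | one => simpa using A.one_mem
    | mul x y _ _ ihx ihy =>
      have h4 : g * (x * y) * g⁻¹ = (g * x * g⁻¹) * (g * y * g⁻¹) := by group
      rw [h4]
      exact A.mul_mem ihx ihy
    | inv x _ ihx =>
      have h4 : g * x⁻¹ * g⁻¹ = (g * x * g⁻¹)⁻¹ := by group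
      rw [h4]
      exact A.inv_mem ihx
  -- the π-torsion part T0
  set genT : Set E := (BH : Set E) ∪ {zπ} with hgenT
  set T0 : Subgroup E := Subgroup.closure genT with hT0def
  have hzπA : zπ ∈ A := by
    rw [hzπdef]
    exact Subgroup.zpow_mem A hzA _
  have hz'A : z' ∈ A := by
    rw [hz'def]
    exact Subgroup.zpow_mem A hzA _
  have hT0A : T0 ≤ A := by
    rw [hT0def, Subgroup.closure_le]
    rintro x (hx | hx)
    · exact hBH_le_A _ hx
    · rw [Set.mem_singleton_iff] at hx
      rw [hx]
      exact hzπA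
  have hT0H : T0 ≤ H := le_trans hT0A hAH
  have hBH_le_T0 : ∀ x ∈ BH, x ∈ T0 := fun x hx => Subgroup.subset_closure (Or.inl hx)
  have hzπT0 : zπ ∈ T0 := Subgroup.subset_closure (Or.inr rfl)
  have hT0tor : ∀ x ∈ T0, x ^ π ^ (N₀ + α') = 1 := by
    have key : ∀ x ∈ T0, x ∈ A ∧ x ^ π ^ (N₀ + α') = 1 := by
      intro x hx
      rw [hT0def] at hx
      induction hx using Subgroup.closure_induction with
      | mem y hy =>
        rcases hy with hy | hy
        · refine ⟨hBH_le_A _ hy, ?_⟩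
          rw [pow_add, pow_mul, hker_tor y (MonoidHom.mem_ker.mp hy.1), one_pow]
        · rw [Set.mem_singleton_iff] at hy
          subst hy
          refine ⟨hzπA, ?_⟩
          rw [Nat.add_comm N₀ α', pow_add, pow_mul, hzπtor, one_pow]
      | one => exact ⟨A.one_mem, one_pow _⟩
      | mul a c _ _ iha ihc =>
        refine ⟨A.mul_mem iha.1 ihc.1, ?_⟩
        rw [(hA_comm a iha.1 c ihc.1).mul_pow, iha.2, ihc.2, one_mul]
      | inv a _ iha =>
        refine ⟨A.inv_mem iha.1, ?_⟩
        rw [inv_pow, iha.2, inv_one]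
    exact fun x hx => (key x hx).2
  -- T0 is cyclic
  have hT0cyc : IsCyclic T0 := by
    let θ : T0 →* (H ⧸ P.subgroupOf H) :=
      (QuotientGroup.mk' (P.subgroupOf H)).comp (Subgroup.inclusion hT0H)
    have hθinj : Function.Injective θ := by
      rw [injective_iff_map_eq_one]
      intro t ht
      have h1 : (Subgroup.inclusion hT0H t : H) ∈ P.subgroupOf H := by
        rw [← QuotientGroup.ker_mk' (P.subgroupOf H)]
        exact ht
      have h2 : (t : E) ∈ P := Subgroup.mem_subgroupOf.mp h1
      have h3 : (t : E) ^ π ^ (N₀ + α') = 1 := hT0tor _ t.2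
      have h4 := htrivP _ h2 ⟨_, h3⟩
      exact Subtype.ext h4
    let eT := MonoidHom.ofInjective hθinj
    exact isCyclic_of_surjective eT.symm eT.symm.surjective
  obtain ⟨g₀, hg₀⟩ := IsCyclic.exists_generator (α := T0)
  set g : E := (g₀ : E) with hgdef
  have hgT0 : g ∈ T0 := g₀.2
  have hT0_sub : ∀ x ∈ T0, ∃ k : ℤ, g ^ k = x := by
    intro x hx
    obtain ⟨k, hk⟩ := Subgroup.mem_zpowers_iff.mp (hg₀ ⟨x, hx⟩)
    refine ⟨k, ?_⟩
    have := congrArg (Subtype.val) hk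
    simpa [SubgroupClass.coe_zpow] using this
  -- the generator κ of A
  have hgtor : g ^ π ^ (N₀ + α') = 1 := hT0tor g hgT0
  have hog : orderOf g ∣ π ^ (N₀ + α') := orderOf_dvd_of_pow_eq_one hgtor
  have hoz' : orderOf z' ∣ β := orderOf_dvd_of_pow_eq_one hz'β
  have hcop2 : Nat.Coprime (orderOf g) (orderOf z') := by
    apply Nat.Coprime.coprime_dvd_left hog
    apply Nat.Coprime.coprime_dvd_right hoz'
    exact Nat.Coprime.pow_left _ (hπ.coprime_iff_not_dvd.mpr hπβ)
  have hgz' : Commute g z' := hA_comm g (hT0A hgT0) z' hz'A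
  set κ := g * z' with hκdef
  have hbez3 : (1 : ℤ) = (orderOf g : ℤ) * Nat.gcdA (orderOf g) (orderOf z')
      + (orderOf z' : ℤ) * Nat.gcdB (orderOf g) (orderOf z') := by
    have h0 := Nat.gcd_eq_gcd_ab (orderOf g) (orderOf z')
    rw [Nat.Coprime.gcd_eq_one hcop2] at h0
    push_cast at h0 ⊢
    linarith
  have hgκ : g ∈ Subgroup.zpowers κ := by
    refine ⟨(orderOf z' : ℤ) * Nat.gcdB (orderOf g) (orderOf z'), ?_⟩
    show κ ^ ((orderOf z' : ℤ) * Nat.gcdB (orderOf g) (orderOf z')) = g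
    rw [hκdef, hgz'.mul_zpow]
    have h1 : z' ^ ((orderOf z' : ℤ) * Nat.gcdB (orderOf g) (orderOf z')) = 1 := by
      rw [zpow_mul, zpow_natCast, pow_orderOf_eq_one, one_zpow]
    have h2 : g ^ ((orderOf z' : ℤ) * Nat.gcdB (orderOf g) (orderOf z')) = g := by
      have h3 : (orderOf z' : ℤ) * Nat.gcdB (orderOf g) (orderOf z')
          = 1 - (orderOf g : ℤ) * Nat.gcdA (orderOf g) (orderOf z') := by linarith [hbez3]
      rw [h3, zpow_sub, zpow_one, zpow_mul, zpow_natCast, pow_orderOf_eq_one, one_zpow]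
      simp
    rw [h1, h2, mul_one]
  have hz'κ : z' ∈ Subgroup.zpowers κ := by
    refine ⟨(orderOf g : ℤ) * Nat.gcdA (orderOf g) (orderOf z'), ?_⟩
    show κ ^ ((orderOf g : ℤ) * Nat.gcdA (orderOf g) (orderOf z')) = z'
    rw [hκdef, hgz'.mul_zpow]
    have h1 : g ^ ((orderOf g : ℤ) * Nat.gcdA (orderOf g) (orderOf z')) = 1 := by
      rw [zpow_mul, zpow_natCast, pow_orderOf_eq_one, one_zpow]
    have h2 : z' ^ ((orderOf g : ℤ) * Nat.gcdA (orderOf g) (orderOf z')) = z' := by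
      have h3 : (orderOf g : ℤ) * Nat.gcdA (orderOf g) (orderOf z')
          = 1 - (orderOf z' : ℤ) * Nat.gcdB (orderOf g) (orderOf z') := by linarith [hbez3]
      rw [h3, zpow_sub, zpow_one, zpow_mul, zpow_natCast, pow_orderOf_eq_one, one_zpow]
      simp
    rw [h1, h2, one_mul]
  have hκA : κ ∈ A := A.mul_mem (hT0A hgT0) hz'A
  have hAκ : A = Subgroup.zpowers κ := by
    apply le_antisymm
    · rw [hAdef, Subgroup.closure_le]
      rintro x (hx | hx)
      · obtain ⟨k, hk⟩ := hT0_sub x (hBH_le_T0 x hx)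
        rw [← hk]
        exact Subgroup.zpow_mem _ hgκ k
      · rw [Set.mem_singleton_iff] at hx
        subst hx
        rw [← hzsplit]
        obtain ⟨k, hk⟩ := hT0_sub zπ hzπT0
        refine Subgroup.mul_mem _ ?_ hz'κ
        rw [← hk]
        exact Subgroup.zpow_mem _ hgκ k
    · rw [Subgroup.zpowers_le]
      exact hκA
  have hAcyc : IsCyclic A := by
    refine ⟨⟨⟨κ, hκA⟩, ?_⟩⟩
    intro x
    have hx : (x : E) ∈ Subgroup.zpowers κ := hAκ ▸ x.2
    obtain ⟨k, hk⟩ := Subgroup.mem_zpowers_iff.mp hx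
    refine Subgroup.mem_zpowers_iff.mpr ⟨k, ?_⟩
    apply Subtype.ext
    simpa [SubgroupClass.coe_zpow] using hk
  -- the quotient E / A is a q-group
  letI := hA_norm
  have hquot : IsPGroup q (E ⧸ A) := by
    intro xq
    obtain ⟨x, rfl⟩ := QuotientGroup.mk'_surjective A xq
    refine ⟨b + N₀, ?_⟩
    obtain ⟨j, hj⟩ := hjx x
    set ν := x ^ q ^ b * (z ^ j)⁻¹ with hν
    have hρν : ρ ν = 1 := by
      rw [hν, map_mul, map_inv, map_zpow, map_pow, hj, mul_inv_cancel]
    have hx_eq : x ^ q ^ b = ν * z ^ j := by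
      rw [hν, inv_mul_cancel_right]
    have hmkz : QuotientGroup.mk' A (z ^ j) = 1 := by
      rw [← MonoidHom.mem_ker, QuotientGroup.ker_mk']
      exact Subgroup.zpow_mem _ hzA j
    have hmain : (QuotientGroup.mk' A x) ^ q ^ b = QuotientGroup.mk' A ν := by
      rw [← map_pow, hx_eq, map_mul, hmkz, mul_one]
    by_cases hπq : π = q
    · have h2 : (QuotientGroup.mk' A ν) ^ q ^ N₀ = 1 := by
        rw [← map_pow, ← hπq, hker_tor ν hρν, map_one]
      rw [pow_add, pow_mul, hmain, h2]
    · have hνH : ν ∈ H := by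
        obtain ⟨k, hk⟩ := hxH ν
        have hνtor : ν ^ π ^ N₀ = 1 := hker_tor ν hρν
        have hcop3 : Nat.Coprime (q ^ k) (π ^ N₀) :=
          Nat.Coprime.pow _ _ ((Nat.coprime_primes hq hπ).mpr (Ne.symm hπq))
        have hb4 : (1 : ℤ) = (q ^ k : ℤ) * Nat.gcdA (q ^ k) (π ^ N₀)
            + (π ^ N₀ : ℤ) * Nat.gcdB (q ^ k) (π ^ N₀) := by
          have h0 := Nat.gcd_eq_gcd_ab (q ^ k) (π ^ N₀)
          rw [Nat.Coprime.gcd_eq_one hcop3] at h0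
          push_cast at h0 ⊢
          linarith
        have hν1 : ν = (ν ^ (q ^ k)) ^ (Nat.gcdA (q ^ k) (π ^ N₀))
            * (ν ^ (π ^ N₀)) ^ (Nat.gcdB (q ^ k) (π ^ N₀)) := by
          have h5 : ν ^ (1 : ℤ) = ν ^ ((q ^ k : ℤ) * Nat.gcdA (q ^ k) (π ^ N₀)
              + (π ^ N₀ : ℤ) * Nat.gcdB (q ^ k) (π ^ N₀)) := by rw [← hb4]
          rw [zpow_one, zpow_add, zpow_mul, zpow_mul] at h5
          have hc1' : ν ^ ((q : ℤ) ^ k) = ν ^ (q ^ k) := by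
            rw [← Nat.cast_pow, zpow_natCast]
          have hc2' : ν ^ ((π : ℤ) ^ N₀) = ν ^ (π ^ N₀) := by
            rw [← Nat.cast_pow, zpow_natCast]
          rw [hc1', hc2'] at h5
          exact h5
        rw [hν1]
        refine H.mul_mem (Subgroup.zpow_mem H hk _) ?_
        rw [hνtor, one_zpow]
        exact H.one_mem
      have hνA : ν ∈ A := by
        refine hBH_le_A ν ?_
        rw [hBHdef, Subgroup.mem_inf]
        exact ⟨MonoidHom.mem_ker.mpr hρν, hνH⟩
      have h2 : QuotientGroup.mk' A ν = 1 := by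
        rw [← MonoidHom.mem_ker, QuotientGroup.ker_mk']
        exact hνA
      rw [pow_add, pow_mul, hmain, h2, one_pow]
  exact ⟨q, hq, A, hA_norm, hAcyc, hquot⟩


-- ############ Part B: transport of Dress data along surjective maps ############

section Transport

variable {G G₂ : Type*} [Group G] [Group G₂]

lemma subgroupOf_map_normal (f : G →* G₂) {P H : Subgroup G} (hPH : P ≤ H)
    (hPHn : (P.subgroupOf H).Normal) :
    ((P.map f).subgroupOf (H.map f)).Normal := by
  constructor
  intro n hn g
  rw [Subgroup.mem_subgroupOf] at hn ⊢
  obtain ⟨pe, hpe, hpen⟩ := hn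
  obtain ⟨h, hh, hhg⟩ := g.2
  have hmem : h * pe * h⁻¹ ∈ P := by
    have h0 := hPHn.conj_mem (⟨pe, hPH hpe⟩ : H)
      (Subgroup.mem_subgroupOf.mpr (by simpa using hpe)) (⟨h, hh⟩ : H)
    have h1 := Subgroup.mem_subgroupOf.mp h0
    simpa using h1
  refine ⟨h * pe * h⁻¹, hmem, ?_⟩
  have h2 : ((g * n * g⁻¹ : ↥(H.map f)) : G₂) = (g : G₂) * (n : G₂) * (g : G₂)⁻¹ := by
    simp
  rw [h2, ← hhg, ← hpen]
  simp [map_mul]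

lemma map_quotient_cyclic (f : G →* G₂) {P H : Subgroup G} (hPH : P ≤ H)
    (hPHn : (P.subgroupOf H).Normal)
    (hcyc : letI := hPHn; IsCyclic (H ⧸ P.subgroupOf H)) :
    letI := subgroupOf_map_normal f hPH hPHn
    IsCyclic ((H.map f) ⧸ (P.map f).subgroupOf (H.map f)) := by
  letI := hPHn
  letI := subgroupOf_map_normal f hPH hPHn
  haveI := hcyc
  let f' : ↥H →* ↥(H.map f) := f.subgroupMap H
  let θ : ↥H →* ((H.map f) ⧸ (P.map f).subgroupOf (H.map f)) :=
    (QuotientGroup.mk' _).comp f'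
  have hker : ∀ x ∈ P.subgroupOf H, θ x = 1 := by
    intro x hx
    have h0 : f' x ∈ (P.map f).subgroupOf (H.map f) := by
      rw [Subgroup.mem_subgroupOf]
      exact ⟨(x : G), Subgroup.mem_subgroupOf.mp hx, rfl⟩
    show QuotientGroup.mk' _ (f' x) = 1
    rw [← MonoidHom.mem_ker, QuotientGroup.ker_mk']
    exact h0
  have hsurj : Function.Surjective (QuotientGroup.lift (P.subgroupOf H) θ hker) := by
    intro y
    obtain ⟨y₀, rfl⟩ := QuotientGroup.mk'_surjective _ y
    obtain ⟨x, hx, hxy⟩ := y₀.2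
    refine ⟨QuotientGroup.mk' (P.subgroupOf H) ⟨x, hx⟩, ?_⟩
    have h1 : f' ⟨x, hx⟩ = y₀ := Subtype.ext hxy
    show θ ⟨x, hx⟩ = _
    show QuotientGroup.mk' _ (f' ⟨x, hx⟩) = _
    rw [h1]
  exact isCyclic_of_surjective _ hsurj

lemma map_quotient_pgroup {q : ℕ} (f : G →* G₂) (hf : Function.Surjective f) {H : Subgroup G}
    (hHn : H.Normal) (hq : letI := hHn; IsPGroup q (G ⧸ H)) :
    letI := hHn.map f hf
    IsPGroup q (G₂ ⧸ (H.map f)) := by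
  letI := hHn
  letI := hHn.map f hf
  let θ : G →* G₂ ⧸ (H.map f) := (QuotientGroup.mk' _).comp f
  have hker : ∀ x ∈ H, θ x = 1 := by
    intro x hx
    show QuotientGroup.mk' _ (f x) = 1
    rw [← MonoidHom.mem_ker, QuotientGroup.ker_mk']
    exact ⟨x, hx, rfl⟩
  intro y
  obtain ⟨y₂, rfl⟩ := QuotientGroup.mk'_surjective (H.map f) y
  obtain ⟨x, rfl⟩ := hf y₂
  obtain ⟨k, hk⟩ := hq (QuotientGroup.mk' H x)
  refine ⟨k, ?_⟩
  have h0 : QuotientGroup.mk' (H.map f) (f x)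
      = QuotientGroup.lift H θ hker (QuotientGroup.mk' H x) := rfl
  rw [h0, ← map_pow, hk, map_one]

end Transport


-- ############ gluing : image subgroups of Fgrp are hyperelementary ############

set_option maxHeartbeats 1000000 in
set_option synthInstance.maxHeartbeats 400000 in
lemma fgrp_map_hyperelementary {G : Type*} [Group G]
    (K : Type*) [Field K] [NumberField K] (w : K) {π : ℕ} (hπ : π.Prime) (N₀ τ : ℕ)
    (hτ : τ ≠ 0)
    (φ' : Multiplicative (ZMod τ) →* MulAut (Multiplicative (OwMod K w (π ^ N₀))))
    (η : G →* Fgrp K w (π ^ N₀) τ φ') (D : Subgroup G)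
    {p q : ℕ} (hp : p.Prime) (hq : q.Prime) (hπp : π ≠ p)
    {P H : Subgroup ↥D} (hPH : P ≤ H) (hPHn : (P.subgroupOf H).Normal)
    (hHn : H.Normal) (hP : IsPGroup p P)
    (hcyc : letI := hPHn; IsCyclic (H ⧸ P.subgroupOf H))
    (hEH : letI := hHn; IsPGroup q (↥D ⧸ H)) :
    IsHyperelementary ↥(D.map η) := by
  classical
  let F := Fgrp K w (π ^ N₀) τ φ'
  let ρ : ↥(D.map η) →* Multiplicative (ZMod τ) :=
    SemidirectProduct.rightHom.comp (D.map η).subtype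
  have hρval : ∀ x : ↥(D.map η), ρ x = (x : F).right := fun x => rfl
  -- elements of the kernel commute
  have hker_comm : ∀ x y : ↥(D.map η), ρ x = 1 → ρ y = 1 → Commute x y := by
    intro x y hx hy
    have hx' : (x : F).right = 1 := hx
    have hy' : (y : F).right = 1 := hy
    have hcomm : (x : F) * (y : F) = (y : F) * (x : F) := by
      ext
      · rw [SemidirectProduct.mul_left, SemidirectProduct.mul_left, hx', hy']
        simp [mul_comm]
      · rw [SemidirectProduct.mul_right, SemidirectProduct.mul_right, hx', hy']
    exact Subtype.ext (by simpa using hcomm)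
  -- elements of the kernel are killed by π ^ N₀
  have hleft_tor : ∀ u : Multiplicative (OwMod K w (π ^ N₀)), u ^ (π ^ N₀) = 1 := by
    intro u
    obtain ⟨y, hy⟩ := Ideal.Quotient.mk_surjective
      (I := Ideal.span {((π ^ N₀ : ℕ) : Ow K w)}) u.toAdd
    have h0 : (π ^ N₀ : ℕ) • u.toAdd = 0 := by
      rw [nsmul_eq_mul, ← hy,
        ← map_natCast (Ideal.Quotient.mk (Ideal.span {((π ^ N₀ : ℕ) : Ow K w)})),
        ← map_mul, Ideal.Quotient.eq_zero_iff_mem]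
      exact Ideal.mem_span_singleton.mpr (dvd_mul_right _ _)
    have h1 := congrArg (Multiplicative.ofAdd) h0
    rwa [ofAdd_nsmul, ofAdd_toAdd, ofAdd_zero] at h1
  have hker_tor : ∀ x : ↥(D.map η), ρ x = 1 → x ^ (π ^ N₀) = 1 := by
    intro x hx
    have hx' : (x : F).right = 1 := hx
    have hxinl : (x : F) = SemidirectProduct.inl ((x : F).left) := by
      ext
      · simp
      · simp [hx']
    have hpow : ((x : F)) ^ (π ^ N₀) = 1 := by
      rw [hxinl, ← map_pow, hleft_tor, map_one]
    apply Subtype.ext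
    simpa using hpow
  -- transported Dress data
  let f : ↥D →* ↥(D.map η) := η.subgroupMap D
  have hf : Function.Surjective f := η.subgroupMap_surjective D
  have hPH' : P.map f ≤ H.map f := Subgroup.map_mono hPH
  have hPHn' : ((P.map f).subgroupOf (H.map f)).Normal := subgroupOf_map_normal f hPH hPHn
  have hHn' : (H.map f).Normal := hHn.map f hf
  have hP' : IsPGroup p (P.map f) := hP.map f
  have hcyc' := map_quotient_cyclic f hPH hPHn hcyc
  have hEH' := map_quotient_pgroup f hf hHn hEH
  exact core_hyperelementary hτ ρ hπ hp hq hπp hker_comm hker_tor hPH' hPHn' hHn' hP'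
    hcyc' hEH'

set_option maxHeartbeats 1000000 in
set_option synthInstance.maxHeartbeats 400000 in
/-- Let `w` be a non-zero algebraic number which is not a root of unity, and
`q1 ≠ q2` primes such that `v_𝔭(w) = 0` for all primes `𝔭` of `O` dividing `q1·O` or `q2·O`.
Let `m1, m2 ≥ 1`, `s = q1^m1·q2^m2`, and let
`F = (O_w/sO_w) ⋊ ℤ/t_w(s)ℤ` (the generator acting by multiplication by `w`). Then for every
Dress subgroup `D ≤ F` there is `i ∈ {1,2}` such that the image of `D` under the canonical
projection `η_i : F → (O_w/q_i^{m_i}O_w) ⋊ ℤ/t_w(q_i^{m_i})ℤ` is hyperelementary. -/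
theorem image_of_dress_subgroup_hyperelementary
    (K : Type*) [Field K] [NumberField K] (w : K) (hw0 : w ≠ 0)
    (hgen : IntermediateField.adjoin ℚ {w} = ⊤)
    (hwnru : ∀ n : ℕ, 0 < n → w ^ n ≠ 1)
    (q1 q2 : ℕ) (hq1 : q1.Prime) (hq2 : q2.Prime) (hq12 : q1 ≠ q2)
    (hval : ∀ v : IsDedekindDomain.HeightOneSpectrum (NumberField.RingOfIntegers K),
      ((q1 : NumberField.RingOfIntegers K) ∈ v.asIdeal ∨
        (q2 : NumberField.RingOfIntegers K) ∈ v.asIdeal) → v.valuation K w = 1)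
    (m1 m2 : ℕ) (hm1 : 0 < m1) (hm2 : 0 < m2)
    (t t1 t2 : ℕ)
    (ht : IsTw K w (q1 ^ m1 * q2 ^ m2) t)
    (ht1 : IsTw K w (q1 ^ m1) t1) (ht2 : IsTw K w (q2 ^ m2) t2)
    (φ : Multiplicative (ZMod t) →* MulAut (Multiplicative (OwMod K w (q1 ^ m1 * q2 ^ m2))))
    (hφ : IsWAction K w (q1 ^ m1 * q2 ^ m2) t φ)
    (φ1 : Multiplicative (ZMod t1) →* MulAut (Multiplicative (OwMod K w (q1 ^ m1))))
    (hφ1 : IsWAction K w (q1 ^ m1) t1 φ1)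
    (φ2 : Multiplicative (ZMod t2) →* MulAut (Multiplicative (OwMod K w (q2 ^ m2))))
    (hφ2 : IsWAction K w (q2 ^ m2) t2 φ2)
    (η1 : Fgrp K w (q1 ^ m1 * q2 ^ m2) t φ →* Fgrp K w (q1 ^ m1) t1 φ1)
    (hη1 : ∀ (x : Ow K w) (k : ℤ),
      η1 ⟨Multiplicative.ofAdd (Ideal.Quotient.mk _ x), Multiplicative.ofAdd ((k : ZMod t))⟩
        = ⟨Multiplicative.ofAdd (Ideal.Quotient.mk _ x),
            Multiplicative.ofAdd ((k : ZMod t1))⟩)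
    (η2 : Fgrp K w (q1 ^ m1 * q2 ^ m2) t φ →* Fgrp K w (q2 ^ m2) t2 φ2)
    (hη2 : ∀ (x : Ow K w) (k : ℤ),
      η2 ⟨Multiplicative.ofAdd (Ideal.Quotient.mk _ x), Multiplicative.ofAdd ((k : ZMod t))⟩
        = ⟨Multiplicative.ofAdd (Ideal.Quotient.mk _ x),
            Multiplicative.ofAdd ((k : ZMod t2))⟩)
    (D : Subgroup (Fgrp K w (q1 ^ m1 * q2 ^ m2) t φ)) (hD : IsDressGroup D) :
    IsHyperelementary (D.map η1) ∨ IsHyperelementary (D.map η2) := by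
  classical
  obtain ⟨p, q, hp, hq, P, H, hPH, hPHn, hHn, hPgrp, hcyc, hqgrp⟩ := hD
  have hval1 : ∀ v : HeightOneSpectrum (𝓞 K), (q1 : 𝓞 K) ∈ v.asIdeal → v.valuation K w = 1 :=
    fun v hv => hval v (Or.inl hv)
  have hval2 : ∀ v : HeightOneSpectrum (𝓞 K), (q2 : 𝓞 K) ∈ v.asIdeal → v.valuation K w = 1 :=
    fun v hv => hval v (Or.inr hv)
  by_cases hpq1 : q1 = p
  · have ht2pos : t2 ≠ 0 := tw_pos K w hw0 q2 m2 t2 hq2 hval2 ht2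
    have hπp2 : q2 ≠ p := fun h => hq12 (hpq1.trans h.symm)
    exact Or.inr (fgrp_map_hyperelementary K w hq2 m2 t2 ht2pos φ2 η2 D hp hq hπp2
      hPH hPHn hHn hPgrp hcyc hqgrp)
  · have ht1pos : t1 ≠ 0 := tw_pos K w hw0 q1 m1 t1 hq1 hval1 ht1
    exact Or.inl (fgrp_map_hyperelementary K w hq1 m1 t1 ht1pos φ1 η1 D hp hq hpq1
      hPH hPHn hHn hPgrp hcyc hqgrp)
end

section
/- Let G be a finite group, let p ≠ q be primes, and let A be a normal subgroup of G such that A is a q-group and the quotient G/A is cyclic. Let H be a subgroup of G and let P be a normal subgroup of H which is a p-group, such that the quotient H/P is cyclic of order coprime to p. Then H is cyclic. -/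
open scoped commutatorElement

/-- Let `G` be a finite group, `p ≠ q` primes, and `A ⊴ G` a normal `q`-subgroup
with `G/A` cyclic. Let `H ≤ G` and let `P` be a normal `p`-subgroup of `H` such that `H/P` is
cyclic of order coprime to `p`. Then `H` is cyclic. -/
theorem cyclic_of_p_by_cyclic_in_q_by_cyclic (G : Type*) [Group G] [Finite G]
    (p q : ℕ) (hp : p.Prime) (hq : q.Prime) (hpq : p ≠ q)
    (A : Subgroup G) [A.Normal] (hA : IsPGroup q A) (hGA : IsCyclic (G ⧸ A))
    (H : Subgroup G) (P : Subgroup H) [P.Normal] (hP : IsPGroup p P)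
    (hHP : IsCyclic (H ⧸ P)) (hcop : (Nat.card (H ⧸ P)).Coprime p) :
    IsCyclic H := by
  have hpq' : Nat.Coprime p q := (Nat.coprime_primes hp hq).mpr hpq
  -- any element of H that lies in P (p-power order) and maps into A (q-power order) is trivial
  have key : ∀ x : H, x ∈ P → (x : G) ∈ A → x = 1 := by
    intro x hxP hxA
    obtain ⟨n, hn⟩ := hP ⟨x, hxP⟩
    obtain ⟨m, hm⟩ := hA ⟨(x : G), hxA⟩
    have h1 : orderOf x ∣ p ^ n := by
      have := orderOf_dvd_of_pow_eq_one hn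
      rwa [Subgroup.orderOf_mk] at this
    have h2 : orderOf x ∣ q ^ m := by
      have := orderOf_dvd_of_pow_eq_one hm
      rwa [Subgroup.orderOf_mk, Subgroup.orderOf_coe] at this
    have hco : Nat.Coprime (p ^ n) (q ^ m) := Nat.Coprime.pow n m hpq'
    have : orderOf x ∣ 1 := hco ▸ Nat.dvd_gcd h1 h2
    exact orderOf_eq_one_iff.mp (Nat.dvd_one.mp this)
  -- commutators in H land in P (since H/P cyclic) and in A (since G/A cyclic), hence trivial
  have hcomm : ∀ a b : H, a * b = b * a := by
    intro a b
    have hPmem : ⁅a, b⁆ ∈ P := by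
      rw [← QuotientGroup.eq_one_iff (G := H) (N := P)]
      have h0 : ((⁅a, b⁆ : H) : H ⧸ P) = ⁅(a : H ⧸ P), (b : H ⧸ P)⁆ := rfl
      letI := hHP.commGroup
      rw [h0, commutatorElement_eq_one_iff_mul_comm]
      exact mul_comm _ _
    have hAmem : ((⁅a, b⁆ : H) : G) ∈ A := by
      rw [← QuotientGroup.eq_one_iff (G := G) (N := A)]
      have h0 : (((⁅a, b⁆ : H) : G) : G ⧸ A) = ⁅((a : G) : G ⧸ A), ((b : G) : G ⧸ A)⁆ := rfl
      letI := hGA.commGroup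
      rw [h0, commutatorElement_eq_one_iff_mul_comm]
      exact mul_comm _ _
    have := key _ hPmem hAmem
    rwa [commutatorElement_eq_one_iff_mul_comm] at this
  letI : CommGroup H := { (inferInstance : Group H) with mul_comm := hcomm }
  -- P is cyclic: it injects into the cyclic group G/A
  have hPcyc : IsCyclic P := by
    let f : P →* G ⧸ A := (QuotientGroup.mk' A).comp (H.subtype.comp P.subtype)
    have hf : Function.Injective f := by
      intro x y hxy
      have : f (x * y⁻¹) = 1 := by rw [map_mul, map_inv, hxy, mul_inv_cancel]
      have hmem : (((x * y⁻¹ : P) : H) : G) ∈ A := (QuotientGroup.eq_one_iff _).mp this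
      have := key ((x * y⁻¹ : P) : H) (x * y⁻¹).2 hmem
      have hx : (x * y⁻¹ : P) = 1 := Subtype.ext (by exact_mod_cast congrArg Subtype.val this)
      rwa [mul_inv_eq_one] at hx
    exact isCyclic_of_surjective _ (MonoidHom.ofInjective hf).symm.surjective
  -- exponent H = card H
  haveI := Fact.mk hp
  obtain ⟨n, hn⟩ := hP.exists_card_eq
  have hcard : Nat.card H = Nat.card (H ⧸ P) * Nat.card P :=
    Subgroup.card_eq_card_quotient_mul_card_subgroup P
  have hdvd1 : Nat.card P ∣ Monoid.exponent H := by
    rw [← hPcyc.exponent_eq_card]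
    exact Monoid.exponent_dvd_of_monoidHom P.subtype P.subtype_injective
  have hdvd2 : Nat.card (H ⧸ P) ∣ Monoid.exponent H := by
    rw [← hHP.exponent_eq_card]
    exact MonoidHom.exponent_dvd (QuotientGroup.mk'_surjective P)
  have hco2 : Nat.Coprime (Nat.card (H ⧸ P)) (Nat.card P) := by
    rw [hn]; exact hcop.pow_right n
  have hmul : Nat.card (H ⧸ P) * Nat.card P ∣ Monoid.exponent H :=
    hco2.mul_dvd_of_dvd_of_dvd hdvd2 hdvd1
  have hexp : Monoid.exponent H = Nat.card H :=
    Nat.dvd_antisymm Group.exponent_dvd_nat_card (hcard ▸ hmul)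
  exact IsCyclic.of_exponent_eq_card hexp
end
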